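/- Let E be a pseudo effect algebra satisfying (RDP). Then the set J(E) of Jordan signed measures on E, with pointwise addition and the pointwise order ≤⁺, is an Abelian Dedekind complete lattice-ordered group: it is an abelian lattice-ordered group in which every nonempty subset that is bounded above has a supremum. -/

import Mathlib

universe u v

/-- A pseudo effect algebra: a partial algebra `(E; +, 0, 1)` with a partially defined
binary operation (modelled as `E → E → Option E`) satisfying (i)-(iv). -/
structure PseudoEffectAlgebra (E : Type u) where
  add : E → E → Option E
  zero : E
  one : E
  /-- (i) `a+b` and `(a+b)+c` exist iff `b+c` and `a+(b+c)` exist, and then they are equal. -/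
  assoc : ∀ a b c x : E,
    (∃ ab, add a b = some ab ∧ add ab c = some x) ↔
    (∃ bc, add b c = some bc ∧ add a bc = some x)
  /-- (ii) there is exactly one `d` with `a + d = 1`. -/
  rinv : ∀ a : E, ∃! d, add a d = some one
  /-- (ii) there is exactly one `e` with `e + a = 1`. -/
  linv : ∀ a : E, ∃! e, add e a = some one
  /-- (iii) if `a+b` exists there are `d, e` with `a+b = d+a = b+e`. -/
  com_ex : ∀ a b ab : E, add a b = some ab →
    (∃ d, add d a = some ab) ∧ (∃ e, add b e = some ab)
  /-- (iv) if `1 + a` exists then `a = 0`. -/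
  one_add : ∀ a x : E, add one a = some x → a = zero
  /-- (iv) if `a + 1` exists then `a = 0`. -/
  add_one : ∀ a x : E, add a one = some x → a = zero

namespace PseudoEffectAlgebra

variable {E : Type u}

/-- `a ≤ b` iff `a + c = b` for some `c`. -/
def le (P : PseudoEffectAlgebra E) (a b : E) : Prop := ∃ c, P.add a c = some b

/-- The Riesz Decomposition Property (RDP). -/
def RDP (P : PseudoEffectAlgebra E) : Prop :=
  ∀ a₁ a₂ b₁ b₂ x : E, P.add a₁ a₂ = some x → P.add b₁ b₂ = some x →
    ∃ d₁ d₂ d₃ d₄, P.add d₁ d₂ = some a₁ ∧ P.add d₃ d₄ = some a₂ ∧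
      P.add d₁ d₃ = some b₁ ∧ P.add d₂ d₄ = some b₂

/-- A pseudo effect algebra with commutative `+` is an effect algebra. -/
def Commutative (P : PseudoEffectAlgebra E) : Prop := ∀ a b : E, P.add a b = P.add b a

/-- A signed measure: additive on existing sums. -/
def IsSignedMeasure (P : PseudoEffectAlgebra E) (m : E → ℝ) : Prop :=
  ∀ a b ab : E, P.add a b = some ab → m ab = m a + m b

/-- A measure: a nonnegative signed measure. -/
def IsMeasure (P : PseudoEffectAlgebra E) (m : E → ℝ) : Prop :=
  IsSignedMeasure P m ∧ ∀ a : E, 0 ≤ m a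

/-- A state: a normalized measure. -/
def IsState (P : PseudoEffectAlgebra E) (s : E → ℝ) : Prop :=
  IsMeasure P s ∧ s P.one = 1

/-- A Jordan signed measure: a difference of two measures. -/
def IsJordan (P : PseudoEffectAlgebra E) (m : E → ℝ) : Prop :=
  ∃ m₁ m₂ : E → ℝ, IsMeasure P m₁ ∧ IsMeasure P m₂ ∧ m = m₁ - m₂

/-- `J(E)`, the set of Jordan signed measures. -/
def Jordan (P : PseudoEffectAlgebra E) : Set (E → ℝ) := {m | IsJordan P m}

/-- `M⁺(E)`, the set of measures. -/
def Measures (P : PseudoEffectAlgebra E) : Set (E → ℝ) := {m | IsMeasure P m}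

/-- `S(E)`, the set of states. -/
def States (P : PseudoEffectAlgebra E) : Set (E → ℝ) := {s | IsState P s}

/-- `sup` is the least upper bound of `S` computed within the subset `J`
(with the pointwise order `≤⁺` on functions). -/
def IsLubIn (J S : Set (E → ℝ)) (sup : E → ℝ) : Prop :=
  sup ∈ J ∧ (∀ m ∈ S, m ≤ sup) ∧ ∀ b ∈ J, (∀ m ∈ S, m ≤ b) → sup ≤ b

/-- `inf` is the greatest lower bound of `S` computed within the subset `J`. -/
def IsGlbIn (J S : Set (E → ℝ)) (inf : E → ℝ) : Prop :=
  inf ∈ J ∧ (∀ m ∈ S, inf ≤ m) ∧ ∀ b ∈ J, (∀ m ∈ S, b ≤ m) → b ≤ inf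

/-- `SumList P [x₁, …, xₙ] x` means the sum `x₁ + ⋯ + xₙ` is defined in `E` and equals `x`. -/
inductive SumList (P : PseudoEffectAlgebra E) : List E → E → Prop
  | single (a : E) : SumList P [a] a
  | cons {l : List E} {b : E} (a ab : E) :
      SumList P l b → P.add a b = some ab → SumList P (a :: l) ab

/-- A face of a convex set `K`: a convex extreme subset. -/
def IsFace (K F : Set (E → ℝ)) : Prop := Convex ℝ F ∧ IsExtreme ℝ K F

/-- The complementary face `F'` of `F` in `K`: the union of all faces of `K` disjoint from `F`. -/
def ComplFace (K F : Set (E → ℝ)) : Set (E → ℝ) :=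
  ⋃₀ {G | IsFace K G ∧ Disjoint G F}

/-- The cone `V(F) = {α s : α ≥ 0, s ∈ F}` generated by a subset `F` of the state space. -/
def VCone (F : Set (E → ℝ)) : Set (E → ℝ) :=
  {m | ∃ α : ℝ, 0 ≤ α ∧ ∃ s ∈ F, m = α • s}

/-- `V(F)` is `∨`-closed: for every chain in `V(F)` bounded above in `M⁺(E)`,
the supremum taken in `J(E)` belongs to `V(F)`. -/
def VeeClosed (P : PseudoEffectAlgebra E) (F : Set (E → ℝ)) : Prop :=
  ∀ C : Set (E → ℝ), C ⊆ VCone F → C.Nonempty → IsChain (· ≤ ·) C →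
    (∃ b ∈ Measures P, ∀ m ∈ C, m ≤ b) →
    ∀ msup : E → ℝ, IsLubIn (Jordan P) C msup → msup ∈ VCone F

/-- `a` is the supremum of `S ⊆ E` in the partial order of `E`. -/
def IsLUBe (P : PseudoEffectAlgebra E) (S : Set E) (a : E) : Prop :=
  (∀ x ∈ S, P.le x a) ∧ ∀ b : E, (∀ x ∈ S, P.le x b) → P.le a b

/-- A σ-additive (signed) measure. -/
def SigmaAdditive (P : PseudoEffectAlgebra E) (m : E → ℝ) : Prop :=
  ∀ (a_ : ℕ → E) (a : E), (∀ n : ℕ, P.le (a_ n) (a_ (n + 1))) →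
    IsLUBe P (Set.range a_) a →
    Filter.Tendsto (fun n => m (a_ n)) Filter.atTop (nhds (m a))

/-- An upwards continuous (signed) measure: `{a_t} ↑ a` implies `{m(a_t)} ↑ m(a)`. -/
def UpwardsContinuous (P : PseudoEffectAlgebra E) (m : E → ℝ) : Prop :=
  ∀ {T : Type v} [Nonempty T] (a_ : T → E) (a : E),
    (∀ s t : T, ∃ r : T, P.le (a_ s) (a_ r) ∧ P.le (a_ t) (a_ r)) →
    IsLUBe P (Set.range a_) a →
    IsLUB (Set.range fun t => m (a_ t)) (m a)

/-- The system `{a_t}_{t ∈ T}` is summable with sum `a`: every finite subsystem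
(coded by a duplicate-free list) has a sum in `E`, and `a` is the supremum of
all such finite partial sums. -/
def IsSummableSum (P : PseudoEffectAlgebra E) {T : Type v} (a_ : T → E) (a : E) : Prop :=
  (∀ l : List T, l ≠ [] → l.Nodup → ∃ x : E, SumList P (l.map a_) x) ∧
  IsLUBe P {x : E | ∃ l : List T, l.Nodup ∧ SumList P (l.map a_) x} a

/-- A completely additive (signed) measure: whenever `a = Σ_{t∈T} a_t`, the value `m a`
is the supremum of the finite partial sums `Σ_{t∈F} m (a_t)`. -/
def CompletelyAdditive (P : PseudoEffectAlgebra E) (m : E → ℝ) : Prop :=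
  ∀ {T : Type v} (a_ : T → E) (a : E), IsSummableSum P a_ a →
    IsLUB {r : ℝ | ∃ l : List T, l.Nodup ∧ r = (l.map (fun t => m (a_ t))).sum} (m a)

/-- An ideal of a pseudo effect algebra. -/
def IsIdeal (P : PseudoEffectAlgebra E) (I : Set E) : Prop :=
  P.zero ∈ I ∧
  (∀ a ∈ I, ∀ b ∈ I, ∀ ab : E, P.add a b = some ab → ab ∈ I) ∧
  (∀ a b : E, b ∈ I → P.le a b → a ∈ I)

/-- A normal ideal: `a + I = I + a` for all `a`. -/
def IsNormalIdeal (P : PseudoEffectAlgebra E) (I : Set E) : Prop :=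
  IsIdeal P I ∧
  ∀ a : E, {x : E | ∃ b ∈ I, P.add a b = some x} = {x : E | ∃ b ∈ I, P.add b a = some x}

/-- `m₁ ≪_ε m₂`: `m₁` is `m₂`-continuous. -/
def EpsCont (m₁ m₂ : E → ℝ) : Prop :=
  ∀ ε : ℝ, 0 < ε → ∃ δ : ℝ, 0 < δ ∧ ∀ a : E, m₂ a < δ → m₁ a < ε

/-- `m₁ ≪ m₂`: `m₁` is absolutely continuous with respect to `m₂`. -/
def AbsCont (m₁ m₂ : E → ℝ) : Prop := ∀ a : E, m₂ a = 0 → m₁ a = 0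

/-- `a⁻ = 1 ⧵ a`, the unique element with `a⁻ + a = 1`. -/
noncomputable def lneg (P : PseudoEffectAlgebra E) (a : E) : E := (P.linv a).exists.choose

/-- `a` is central (Boolean): `a ∧ a⁻ = 0`. -/
def IsCentral (P : PseudoEffectAlgebra E) (a : E) : Prop :=
  ∀ x : E, P.le x a → P.le x (lneg P a) → x = P.zero

/-- `E` is monotone σ-complete. -/
def MonotoneSigmaComplete (P : PseudoEffectAlgebra E) : Prop :=
  ∀ a_ : ℕ → E, (∀ n : ℕ, P.le (a_ n) (a_ (n + 1))) → ∃ a : E, IsLUBe P (Set.range a_) a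

/-- `m ⊥ t`: there is `a ∈ E` with `t a = 0` and `m a⁻ = 0`. -/
def Perp (P : PseudoEffectAlgebra E) (m t : E → ℝ) : Prop :=
  ∃ a : E, t a = 0 ∧ m (lneg P a) = 0

/-- Unique decomposition of every measure `m` as `m = m₁ + m₂` with `m₁` a measure
satisfying `Q` and `m₂` a measure singular with respect to the measures satisfying `Q`. -/
def MeasDecomp (P : PseudoEffectAlgebra E) (Q : (E → ℝ) → Prop) : Prop :=
  ∀ m ∈ Measures P, ∃ m₁ m₂ : E → ℝ,
    (IsMeasure P m₁ ∧ Q m₁) ∧ IsMeasure P m₂ ∧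
    (∀ t : E → ℝ, IsMeasure P t → Q t → t ≤ m₂ → t = 0) ∧
    m = m₁ + m₂ ∧
    (∀ m₁' m₂' : E → ℝ, (IsMeasure P m₁' ∧ Q m₁') → IsMeasure P m₂' →
      (∀ t : E → ℝ, IsMeasure P t → Q t → t ≤ m₂' → t = 0) →
      m = m₁' + m₂' → m₁' = m₁ ∧ m₂' = m₂)

/-- Unique convex decomposition of every state `s` as `s = λ₁ s₁ + λ₂ s₂` with `s₁` a state
satisfying `Q` and `s₂` a state such that `α s' ≤⁺ s₂` with `s'` a state satisfying `Q`
and `α ≥ 0` forces `α = 0`. -/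
def StateDecomp (P : PseudoEffectAlgebra E) (Q : (E → ℝ) → Prop) : Prop :=
  ∀ s ∈ States P, ∃ l₁ l₂ : ℝ, 0 ≤ l₁ ∧ 0 ≤ l₂ ∧ l₁ + l₂ = 1 ∧
    ∃ s₁ s₂ : E → ℝ,
      (IsState P s₁ ∧ Q s₁) ∧ IsState P s₂ ∧
      (∀ (s' : E → ℝ) (α : ℝ), IsState P s' → Q s' → 0 ≤ α → α • s' ≤ s₂ → α = 0) ∧
      s = l₁ • s₁ + l₂ • s₂ ∧
      (∀ (μ₁ μ₂ : ℝ) (s₁' s₂' : E → ℝ), 0 ≤ μ₁ → 0 ≤ μ₂ → μ₁ + μ₂ = 1 →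
        (IsState P s₁' ∧ Q s₁') → IsState P s₂' →
        (∀ (s' : E → ℝ) (α : ℝ), IsState P s' → Q s' → 0 ≤ α → α • s' ≤ s₂' → α = 0) →
        s = μ₁ • s₁' + μ₂ • s₂' →
        μ₁ = l₁ ∧ μ₂ = l₂ ∧ (l₁ ≠ 0 → s₁' = s₁) ∧ (l₂ ≠ 0 → s₂' = s₂))

end PseudoEffectAlgebra

open PseudoEffectAlgebra

namespace PEAProof

variable {E : Type u}

lemma add_one_zero (P : PseudoEffectAlgebra E) : P.add P.one P.zero = some P.one := by
  obtain ⟨d, hd, -⟩ := P.rinv P.one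
  have h := P.one_add d P.one hd
  rwa [h] at hd

lemma add_zero_one (P : PseudoEffectAlgebra E) : P.add P.zero P.one = some P.one := by
  obtain ⟨e, he, -⟩ := P.linv P.one
  have h := P.add_one e P.one he
  rwa [h] at he

lemma add_zero' (P : PseudoEffectAlgebra E) (a : E) : P.add a P.zero = some a := by
  obtain ⟨e, he, -⟩ := P.linv a
  obtain ⟨bc, hbc, hbc2⟩ := (P.assoc e a P.zero P.one).mp ⟨P.one, he, add_one_zero P⟩
  obtain ⟨d, hd, huniq⟩ := P.rinv e
  have h1 := huniq bc hbc2
  have h2 := huniq a he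
  rwa [h1.trans h2.symm] at hbc

lemma zero_add' (P : PseudoEffectAlgebra E) (a : E) : P.add P.zero a = some a := by
  obtain ⟨d, hd, -⟩ := P.rinv a
  obtain ⟨ab, hab, hab2⟩ := (P.assoc P.zero a d P.one).mpr ⟨P.one, hd, add_zero_one P⟩
  obtain ⟨e, he, huniq⟩ := P.linv d
  have h1 := huniq ab hab2
  have h2 := huniq a hd
  rwa [h1.trans h2.symm] at hab

lemma sm_zero (P : PseudoEffectAlgebra E) {m : E → ℝ} (h : IsSignedMeasure P m) :
    m P.zero = 0 := by
  have := h P.zero P.zero P.zero (add_zero' P P.zero)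
  linarith

lemma jordan_sm (P : PseudoEffectAlgebra E) {m : E → ℝ} (h : m ∈ Jordan P) :
    IsSignedMeasure P m := by
  obtain ⟨m1, m2, h1, h2, rfl⟩ := h
  intro a b ab hab
  have e1 := h1.1 a b ab hab
  have e2 := h2.1 a b ab hab
  simp only [Pi.sub_apply]
  linarith

lemma zero_measure (P : PseudoEffectAlgebra E) : IsMeasure P (0 : E → ℝ) :=
  ⟨fun _ _ _ _ => by simp, fun _ => le_rfl⟩

lemma measure_mem_jordan (P : PseudoEffectAlgebra E) {m : E → ℝ} (h : IsMeasure P m) :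
    m ∈ Jordan P := ⟨m, 0, h, zero_measure P, by simp⟩

lemma jordan_zero (P : PseudoEffectAlgebra E) : (0 : E → ℝ) ∈ Jordan P :=
  measure_mem_jordan P (zero_measure P)

lemma measure_add (P : PseudoEffectAlgebra E) {m m' : E → ℝ}
    (h : IsMeasure P m) (h' : IsMeasure P m') : IsMeasure P (m + m') := by
  constructor
  · intro a b ab hab
    have := h.1 a b ab hab
    have := h'.1 a b ab hab
    simp only [Pi.add_apply]; linarith
  · intro a
    have := h.2 a; have := h'.2 a
    simp only [Pi.add_apply]; linarith

lemma jordan_add (P : PseudoEffectAlgebra E) {m m' : E → ℝ}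
    (h : m ∈ Jordan P) (h' : m' ∈ Jordan P) : m + m' ∈ Jordan P := by
  obtain ⟨a1, a2, ha1, ha2, rfl⟩ := h
  obtain ⟨b1, b2, hb1, hb2, rfl⟩ := h'
  exact ⟨a1 + b1, a2 + b2, measure_add P ha1 hb1, measure_add P ha2 hb2, by abel⟩

lemma jordan_neg (P : PseudoEffectAlgebra E) {m : E → ℝ} (h : m ∈ Jordan P) :
    -m ∈ Jordan P := by
  obtain ⟨m1, m2, h1, h2, rfl⟩ := h
  exact ⟨m2, m1, h2, h1, by abel⟩

lemma sm_sub (P : PseudoEffectAlgebra E) {m m' : E → ℝ}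
    (h : IsSignedMeasure P m) (h' : IsSignedMeasure P m') : IsSignedMeasure P (m - m') := by
  intro a b ab hab
  have := h a b ab hab; have := h' a b ab hab
  simp only [Pi.sub_apply]; linarith

lemma jordan_of_nonneg_sm (P : PseudoEffectAlgebra E) {m : E → ℝ}
    (h : IsSignedMeasure P m) (h0 : ∀ a, 0 ≤ m a) : m ∈ Jordan P :=
  measure_mem_jordan P ⟨h, h0⟩

/-- The decomposition set used to define the binary supremum. -/
def DSet (P : PseudoEffectAlgebra E) (m m' : E → ℝ) (a : E) : Set ℝ :=
  {r | ∃ b c, P.add b c = some a ∧ r = m b + m' c}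

/-- The binary supremum of two Jordan signed measures. -/
noncomputable def binSup (P : PseudoEffectAlgebra E) (m m' : E → ℝ) : E → ℝ :=
  fun a => sSup (DSet P m m' a)

lemma DSet_nonempty (P : PseudoEffectAlgebra E) (m m' : E → ℝ) (a : E) :
    (DSet P m m' a).Nonempty :=
  ⟨m a + m' P.zero, a, P.zero, add_zero' P a, rfl⟩

lemma DSet_bdd (P : PseudoEffectAlgebra E) {m m' : E → ℝ}
    (hm : m ∈ Jordan P) (hm' : m' ∈ Jordan P) (a : E) : BddAbove (DSet P m m' a) := by
  obtain ⟨m1, m2, hm1, hm2, rfl⟩ := hm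
  obtain ⟨k1, k2, hk1, hk2, rfl⟩ := hm'
  refine ⟨m1 a + k1 a, ?_⟩
  rintro r ⟨b, c, hbc, rfl⟩
  have h1 : m1 a = m1 b + m1 c := hm1.1 b c a hbc
  obtain ⟨e, he⟩ := (P.com_ex b c a hbc).2
  have h2 : k1 a = k1 c + k1 e := hk1.1 c e a he
  have := hm2.2 b; have := hk2.2 c; have := hm1.2 c; have := hk1.2 e
  simp only [Pi.sub_apply]
  linarith

lemma binSup_le (P : PseudoEffectAlgebra E) {m m' k : E → ℝ}
    (hk : IsSignedMeasure P k) (h1 : m ≤ k) (h2 : m' ≤ k) : binSup P m m' ≤ k := by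
  intro a
  apply csSup_le (DSet_nonempty P m m' a)
  rintro r ⟨b, c, hbc, rfl⟩
  have hkk := hk b c a hbc
  have := h1 b; have := h2 c
  linarith

lemma le_binSup_left (P : PseudoEffectAlgebra E) {m m' : E → ℝ}
    (hm : m ∈ Jordan P) (hm' : m' ∈ Jordan P) : m ≤ binSup P m m' := by
  intro a
  have h0 : m' P.zero = 0 := sm_zero P (jordan_sm P hm')
  have : m a + m' P.zero ≤ binSup P m m' a :=
    le_csSup (DSet_bdd P hm hm' a) ⟨a, P.zero, add_zero' P a, rfl⟩
  linarith

lemma le_binSup_right (P : PseudoEffectAlgebra E) {m m' : E → ℝ}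
    (hm : m ∈ Jordan P) (hm' : m' ∈ Jordan P) : m' ≤ binSup P m m' := by
  intro a
  have h0 : m P.zero = 0 := sm_zero P (jordan_sm P hm)
  have : m P.zero + m' a ≤ binSup P m m' a :=
    le_csSup (DSet_bdd P hm hm' a) ⟨P.zero, a, zero_add' P a, rfl⟩
  linarith

/-- Rearrangement: if `b₁+c₁ = a₁`, `b₂+c₂ = a₂`, `a₁+a₂ = x`, then `x = b + c` where
`b = b₁ + d`, `c = c₁ + c₂`, and `d + c₁ = c₁ + b₂`. -/
lemma rearrange (P : PseudoEffectAlgebra E) {b₁ c₁ a₁ b₂ c₂ a₂ x : E}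
    (h1 : P.add b₁ c₁ = some a₁) (h2 : P.add b₂ c₂ = some a₂) (hx : P.add a₁ a₂ = some x) :
    ∃ b c d v, P.add b c = some x ∧ P.add b₁ d = some b ∧ P.add c₁ c₂ = some c ∧
      P.add d c₁ = some v ∧ P.add c₁ b₂ = some v := by
  obtain ⟨u, hu1, hu2⟩ := (P.assoc b₁ c₁ a₂ x).mp ⟨a₁, h1, hx⟩
  obtain ⟨v, hv1, hv2⟩ := (P.assoc c₁ b₂ c₂ u).mpr ⟨a₂, h2, hu1⟩
  obtain ⟨⟨d, hd⟩, -⟩ := P.com_ex c₁ b₂ v hv1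
  obtain ⟨w, hw1, hw2⟩ := (P.assoc d c₁ c₂ u).mp ⟨v, hd, hv2⟩
  obtain ⟨b, hb1, hb2⟩ := (P.assoc b₁ d w x).mpr ⟨u, hw2, hu2⟩
  exact ⟨b, w, d, v, hb2, hb1, hw1, hd, hv1⟩

lemma binSup_sm (P : PseudoEffectAlgebra E) (hRDP : P.RDP) {m m' : E → ℝ}
    (hm : m ∈ Jordan P) (hm' : m' ∈ Jordan P) : IsSignedMeasure P (binSup P m m') := by
  have hsm := jordan_sm P hm
  have hsm' := jordan_sm P hm'
  intro a₁ a₂ x hx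
  apply le_antisymm
  · apply csSup_le (DSet_nonempty P m m' x)
    rintro r ⟨b, c, hbc, rfl⟩
    obtain ⟨d₁, d₂, d₃, d₄, h12, h34, h13, h24⟩ := hRDP a₁ a₂ b c x hx hbc
    have e1 : m b = m d₁ + m d₃ := hsm d₁ d₃ b h13
    have e2 : m' c = m' d₂ + m' d₄ := hsm' d₂ d₄ c h24
    have t1 : m d₁ + m' d₂ ≤ binSup P m m' a₁ :=
      le_csSup (DSet_bdd P hm hm' a₁) ⟨d₁, d₂, h12, rfl⟩
    have t2 : m d₃ + m' d₄ ≤ binSup P m m' a₂ :=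
      le_csSup (DSet_bdd P hm hm' a₂) ⟨d₃, d₄, h34, rfl⟩
    linarith
  · have key : ∀ r ∈ DSet P m m' a₁, ∀ s ∈ DSet P m m' a₂, r + s ≤ binSup P m m' x := by
      rintro r ⟨b₁, c₁, h1, rfl⟩ s ⟨b₂, c₂, h2, rfl⟩
      obtain ⟨b, c, d, v, hbc, hbd, hc, hdc, hcb⟩ := rearrange P h1 h2 hx
      have e1 : m b = m b₁ + m d := hsm b₁ d b hbd
      have e2 : m d + m c₁ = m c₁ + m b₂ := by
        have q1 := hsm d c₁ v hdc
        have q2 := hsm c₁ b₂ v hcb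
        linarith
      have e3 : m' c = m' c₁ + m' c₂ := hsm' c₁ c₂ c hc
      have hle : m b + m' c ≤ binSup P m m' x :=
        le_csSup (DSet_bdd P hm hm' x) ⟨b, c, hbc, rfl⟩
      linarith
    have h1 : binSup P m m' a₁ ≤ binSup P m m' x - binSup P m m' a₂ := by
      apply csSup_le (DSet_nonempty P m m' a₁)
      intro r hr
      have h2 : binSup P m m' a₂ ≤ binSup P m m' x - r :=
        csSup_le (DSet_nonempty P m m' a₂) fun s hs => by linarith [key r hr s hs]
      linarith
    linarith

lemma binSup_jordan (P : PseudoEffectAlgebra E) (hRDP : P.RDP) {m m' : E → ℝ}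
    (hm : m ∈ Jordan P) (hm' : m' ∈ Jordan P) : binSup P m m' ∈ Jordan P := by
  have hs := binSup_sm P hRDP hm hm'
  have hge := le_binSup_left P hm hm'
  have hmeas : IsMeasure P (binSup P m m' - m) :=
    ⟨sm_sub P hs (jordan_sm P hm), fun a => by have := hge a; simp only [Pi.sub_apply]; linarith⟩
  have := jordan_add P (measure_mem_jordan P hmeas) hm
  simpa using this

lemma binSup_isLubIn (P : PseudoEffectAlgebra E) (hRDP : P.RDP) {m m' : E → ℝ}
    (hm : m ∈ Jordan P) (hm' : m' ∈ Jordan P) :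
    IsLubIn (Jordan P) {m, m'} (binSup P m m') := by
  refine ⟨binSup_jordan P hRDP hm hm', ?_, ?_⟩
  · rintro k hk
    rcases hk with rfl | hk
    · exact le_binSup_left P hm hm'
    · rw [Set.mem_singleton_iff] at hk
      subst hk
      exact le_binSup_right P hm hm'
  · intro b hb hub
    exact binSup_le P (jordan_sm P hb) (hub m (Set.mem_insert _ _))
      (hub m' (Set.mem_insert_of_mem _ rfl))

/-- Closure of a set of Jordan measures under binary suprema. -/
inductive SupClosure (P : PseudoEffectAlgebra E) (S : Set (E → ℝ)) : (E → ℝ) → Prop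
  | base {m : E → ℝ} : m ∈ S → SupClosure P S m
  | sup {m m' : E → ℝ} : SupClosure P S m → SupClosure P S m' →
      SupClosure P S (binSup P m m')

end PEAProof

open PEAProof

/-- For a pseudo effect algebra `E` with (RDP), the set `J(E)` of Jordan
signed measures, with pointwise addition and the pointwise order, is an Abelian Dedekind
complete lattice-ordered group: it contains `0`, is closed under addition and negation,
addition is commutative and order-compatible, any two elements have a supremum and an
infimum in `J(E)`, and every nonempty subset of `J(E)` bounded above in `J(E)` has a
least upper bound in `J(E)`. -/
theorem stmt0 {E : Type u} (P : PseudoEffectAlgebra E) (hRDP : P.RDP) :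
    (0 ∈ Jordan P) ∧
    (∀ m ∈ Jordan P, ∀ m' ∈ Jordan P, m + m' ∈ Jordan P) ∧
    (∀ m ∈ Jordan P, -m ∈ Jordan P) ∧
    (∀ m m' : E → ℝ, m + m' = m' + m) ∧
    (∀ m m' k : E → ℝ, m ≤ m' → m + k ≤ m' + k) ∧
    (∀ m ∈ Jordan P, ∀ m' ∈ Jordan P, ∃ msup : E → ℝ, IsLubIn (Jordan P) {m, m'} msup) ∧
    (∀ m ∈ Jordan P, ∀ m' ∈ Jordan P, ∃ minf : E → ℝ, IsGlbIn (Jordan P) {m, m'} minf) ∧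
    (∀ S : Set (E → ℝ), S ⊆ Jordan P → S.Nonempty →
      (∃ b ∈ Jordan P, ∀ m ∈ S, m ≤ b) →
      ∃ msup : E → ℝ, IsLubIn (Jordan P) S msup) := by
  refine ⟨jordan_zero P, fun m hm m' hm' => jordan_add P hm hm',
    fun m hm => jordan_neg P hm, fun m m' => add_comm m m',
    fun m m' k h => add_le_add_left h k,
    fun m hm m' hm' => ⟨binSup P m m', binSup_isLubIn P hRDP hm hm'⟩,
    ?_, ?_⟩
  · -- binary infimum
    intro m hm m' hm'
    have hnm := jordan_neg P hm
    have hnm' := jordan_neg P hm'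
    refine ⟨-(binSup P (-m) (-m')), jordan_neg P (binSup_jordan P hRDP hnm hnm'), ?_, ?_⟩
    · rintro k hk
      have hk' : -k ≤ binSup P (-m) (-m') := by
        rcases hk with rfl | hk
        · exact le_binSup_left P hnm hnm'
        · rw [Set.mem_singleton_iff] at hk; subst hk
          exact le_binSup_right P hnm hnm'
      intro a
      have := hk' a
      simp only [Pi.neg_apply] at this ⊢
      linarith
    · intro c hc hlb
      have h1 : -m ≤ -c := fun a => by
        have := hlb m (Set.mem_insert _ _) a
        simp only [Pi.neg_apply]; linarith
      have h2 : -m' ≤ -c := fun a => by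
        have := hlb m' (Set.mem_insert_of_mem _ rfl) a
        simp only [Pi.neg_apply]; linarith
      have h3 : binSup P (-m) (-m') ≤ -c := by
        refine binSup_le P ?_ h1 h2
        intro a b ab hab
        have := jordan_sm P hc a b ab hab
        simp only [Pi.neg_apply]; linarith
      intro a
      have := h3 a
      simp only [Pi.neg_apply] at this ⊢
      linarith
  · -- Dedekind completeness
    rintro S hS ⟨s₀, hs₀⟩ ⟨b, hb, hub⟩
    have hcl_j : ∀ m, SupClosure P S m → m ∈ Jordan P := by
      intro m h
      induction h with
      | base h => exact hS h
      | sup h1 h2 ih1 ih2 => exact binSup_jordan P hRDP ih1 ih2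
    have hcl_le : ∀ k : E → ℝ, IsSignedMeasure P k → (∀ s ∈ S, s ≤ k) →
        ∀ m, SupClosure P S m → m ≤ k := by
      intro k hk hub' m h
      induction h with
      | base h => exact hub' _ h
      | sup h1 h2 ih1 ih2 => exact binSup_le P hk ih1 ih2
    set Mset : E → Set ℝ := fun a => {r | ∃ m, SupClosure P S m ∧ r = m a} with hMset
    set M : E → ℝ := fun a => sSup (Mset a) with hM
    have hne : ∀ a, (Mset a).Nonempty := fun a => ⟨s₀ a, s₀, SupClosure.base hs₀, rfl⟩
    have hbdd : ∀ a, BddAbove (Mset a) := by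
      intro a
      refine ⟨b a, ?_⟩
      rintro r ⟨m, hm, rfl⟩
      exact hcl_le b (jordan_sm P hb) hub m hm a
    have hmem_le : ∀ m, SupClosure P S m → ∀ a, m a ≤ M a := by
      intro m hm a
      exact le_csSup (hbdd a) ⟨m, hm, rfl⟩
    have hM_sm : IsSignedMeasure P M := by
      intro a₁ a₂ x hx
      apply le_antisymm
      · apply csSup_le (hne x)
        rintro r ⟨m, hm, rfl⟩
        have hadd := jordan_sm P (hcl_j m hm) a₁ a₂ x hx
        have t1 := hmem_le m hm a₁
        have t2 := hmem_le m hm a₂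
        linarith
      · have key : ∀ r ∈ Mset a₁, ∀ s ∈ Mset a₂, r + s ≤ M x := by
          rintro r ⟨m, hm, rfl⟩ s ⟨m', hm', rfl⟩
          have hk : SupClosure P S (binSup P m m') := SupClosure.sup hm hm'
          have hjm := hcl_j m hm
          have hjm' := hcl_j m' hm'
          have t1 := le_binSup_left P hjm hjm' a₁
          have t2 := le_binSup_right P hjm hjm' a₂
          have t3 : binSup P m m' x = binSup P m m' a₁ + binSup P m m' a₂ :=
            binSup_sm P hRDP hjm hjm' a₁ a₂ x hx
          have t4 := hmem_le _ hk x
          linarith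
        have h1 : M a₁ ≤ M x - M a₂ := by
          apply csSup_le (hne a₁)
          intro r hr
          have h2 : M a₂ ≤ M x - r :=
            csSup_le (hne a₂) fun s hs => by linarith [key r hr s hs]
          linarith
        simp only [hM] at h1 ⊢
        linarith
    have hM_j : M ∈ Jordan P := by
      have hs₀j : s₀ ∈ Jordan P := hS hs₀
      have hmeas : IsMeasure P (M - s₀) := by
        refine ⟨sm_sub P hM_sm (jordan_sm P hs₀j), fun a => ?_⟩
        have := hmem_le s₀ (SupClosure.base hs₀) a
        simp only [Pi.sub_apply]; linarith
      have := jordan_add P (measure_mem_jordan P hmeas) hs₀j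
      simpa using this
    refine ⟨M, hM_j, ?_, ?_⟩
    · intro s hs
      exact fun a => hmem_le s (SupClosure.base hs) a
    · intro k hk hub'
      intro a
      apply csSup_le (hne a)
      rintro r ⟨m, hm, rfl⟩
      exact hcl_le k (jordan_sm P hk) hub' m hm a
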